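/- Any subset A of the circle 𝕋¹ = ℝ/2πℤ is connected if and only if its complement 𝕋¹ \ A is connected. -/

import Mathlib

open Set

namespace Stmt3Aux

variable {p : ℝ} [Fact (0 < p)]

lemma key (a : ℝ) (A : Set (AddCircle p)) (ha : (a : AddCircle p) ∉ A)
    (h : IsPreconnected A) : IsPreconnected Aᶜ := by
  have hp : (0 : ℝ) < p := Fact.out
  set φ := AddCircle.openPartialHomeomorphCoe p a with hφ
  have hAt : A ⊆ φ.target := by
    intro x hx
    simp only [hφ, AddCircle.openPartialHomeomorphCoe, mem_compl_iff, mem_singleton_iff]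
    rintro rfl; exact ha hx
  set B : Set ℝ := φ.symm '' A with hB
  have hBsub : B ⊆ Ioo a (a + p) := by
    rintro _ ⟨y, hy, rfl⟩
    exact φ.map_target (hAt hy)
  have hmem : ∀ x ∈ Ioo a (a + p), (x ∈ B ↔ (x : AddCircle p) ∈ A) := by
    intro x hx
    constructor
    · rintro ⟨y, hy, hyx⟩
      have h2 : φ x = y := by
        rw [← hyx, φ.right_inv (hAt hy)]
      have h3 : (x : AddCircle p) = φ x := rfl
      rw [h3, h2]; exact hy
    · intro hx'
      exact ⟨x, hx', φ.left_inv hx⟩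
  have hBpre : IsPreconnected B :=
    h.image _ (φ.continuousOn_symm.mono hAt)
  have hOrd : B.OrdConnected := hBpre.ordConnected
  set L : Set ℝ := {x ∈ Ioo a (a + p) | ∀ b ∈ B, x < b} with hL
  set R : Set ℝ := {x ∈ Ioo a (a + p) | ∀ b ∈ B, b < x} with hR
  have hcoe : Continuous ((↑) : ℝ → AddCircle p) := AddCircle.continuous_mk' p
  have hcomp : Aᶜ = ({(a : AddCircle p)} ∪ (↑) '' L) ∪ ({(a : AddCircle p)} ∪ (↑) '' R) := by
    ext y
    constructor
    · intro hy
      obtain ⟨x, hxI, rfl⟩ : ∃ x, x ∈ Ico a (a + p) ∧ (x : AddCircle p) = y :=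
        ⟨(AddCircle.equivIco p a y : ℝ), (AddCircle.equivIco p a y).2,
          (AddCircle.equivIco p a).symm_apply_apply y⟩
      rcases eq_or_lt_of_le hxI.1 with heq | hlt
      · exact Or.inl (Or.inl (by simp [← heq]))
      · have hxIoo : x ∈ Ioo a (a + p) := ⟨hlt, hxI.2⟩
        have hxB : x ∉ B := fun hxB => hy ((hmem x hxIoo).1 hxB)
        have : x ∈ L ∨ x ∈ R := by
          by_contra hcon
          rw [not_or] at hcon
          obtain ⟨hnl, hnr⟩ := hcon
          obtain ⟨b, hb, hbx⟩ : ∃ b ∈ B, b ≤ x := by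
            by_contra hno; push_neg at hno
            exact hnl ⟨hxIoo, fun b hb => hno b hb⟩
          obtain ⟨b', hb', hxb'⟩ : ∃ b' ∈ B, x ≤ b' := by
            by_contra hno; push_neg at hno
            exact hnr ⟨hxIoo, fun b hb => hno b hb⟩
          exact hxB (hOrd.out hb hb' ⟨hbx, hxb'⟩)
        rcases this with h' | h'
        · exact Or.inl (Or.inr ⟨x, h', rfl⟩)
        · exact Or.inr (Or.inr ⟨x, h', rfl⟩)
    · rintro ((hy | ⟨x, hx, rfl⟩) | (hy | ⟨x, hx, rfl⟩))
      · simpa using (mem_singleton_iff.1 hy ▸ ha)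
      · intro hA
        exact lt_irrefl x (hx.2 x ((hmem x hx.1).2 hA))
      · simpa using (mem_singleton_iff.1 hy ▸ ha)
      · intro hA
        exact lt_irrefl x (hx.2 x ((hmem x hx.1).2 hA))
  -- preconnectedness of the left piece
  have hLord : L.OrdConnected := by
    constructor
    rintro x ⟨hxI, hxb⟩ y ⟨hyI, hyb⟩ z ⟨hxz, hzy⟩
    exact ⟨⟨lt_of_lt_of_le hxI.1 hxz, lt_of_le_of_lt hzy hyI.2⟩,
      fun b hb => lt_of_le_of_lt hzy (hyb b hb)⟩
  have hRord : R.OrdConnected := by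
    constructor
    rintro x ⟨hxI, hxb⟩ y ⟨hyI, hyb⟩ z ⟨hxz, hzy⟩
    exact ⟨⟨lt_of_lt_of_le hxI.1 hxz, lt_of_le_of_lt hzy hyI.2⟩,
      fun b hb => lt_of_lt_of_le (hxb b hb) hxz⟩
  have hpieceL : IsPreconnected ({(a : AddCircle p)} ∪ (↑) '' L) := by
    rcases eq_empty_or_nonempty L with hLe | ⟨x, hx⟩
    · rw [hLe]; simpa using isPreconnected_singleton
    · have hclos : a ∈ closure L := by
        have hsub : Ioc a x ⊆ L := fun z hz =>
          ⟨⟨hz.1, lt_of_le_of_lt hz.2 hx.1.2⟩, fun b hb => lt_of_le_of_lt hz.2 (hx.2 b hb)⟩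
        have : a ∈ closure (Ioc a x) := by
          rw [closure_Ioc (ne_of_lt hx.1.1)]; exact ⟨le_refl a, le_of_lt hx.1.1⟩
        exact closure_mono hsub this
      have hclos' : (a : AddCircle p) ∈ closure ((↑) '' L) :=
        (image_closure_subset_closure_image hcoe) ⟨a, hclos, rfl⟩
      refine ((hLord.isPreconnected).image _ hcoe.continuousOn).subset_closure
        subset_union_right (union_subset ?_ subset_closure)
      simpa using hclos'
  have hpieceR : IsPreconnected ({(a : AddCircle p)} ∪ (↑) '' R) := by
    rcases eq_empty_or_nonempty R with hRe | ⟨x, hx⟩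
    · rw [hRe]; simpa using isPreconnected_singleton
    · have hclos : (a + p) ∈ closure R := by
        have hsub : Ico x (a + p) ⊆ R := fun z hz =>
          ⟨⟨lt_of_lt_of_le hx.1.1 hz.1, hz.2⟩, fun b hb => lt_of_lt_of_le (hx.2 b hb) hz.1⟩
        have : (a + p) ∈ closure (Ico x (a + p)) := by
          rw [closure_Ico (ne_of_lt hx.1.2)]; exact ⟨le_of_lt hx.1.2, le_refl _⟩
        exact closure_mono hsub this
      have hclos' : (a : AddCircle p) ∈ closure ((↑) '' R) := by
        have := (image_closure_subset_closure_image hcoe) ⟨a + p, hclos, rfl⟩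
        rwa [AddCircle.coe_add_period] at this
      refine ((hRord.isPreconnected).image _ hcoe.continuousOn).subset_closure
        subset_union_right (union_subset ?_ subset_closure)
      simpa using hclos'
  rw [hcomp]
  exact IsPreconnected.union (a : AddCircle p) (Or.inl rfl) (Or.inl rfl) hpieceL hpieceR

end Stmt3Aux

/-- a subset of the circle is connected iff its complement is connected
(where the empty set counts as connected, i.e. we use preconnectedness). -/
theorem stmt3 (A : Set (AddCircle (2 * Real.pi))) :
    IsPreconnected A ↔ IsPreconnected Aᶜ := by
  haveI : Fact (0 < 2 * Real.pi) := ⟨by positivity⟩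
  have main : ∀ B : Set (AddCircle (2 * Real.pi)), IsPreconnected B → IsPreconnected Bᶜ := by
    intro B hB
    rcases eq_empty_or_nonempty Bᶜ with hBe | ⟨q, hq⟩
    · rw [hBe]; exact isPreconnected_empty
    · induction q using QuotientAddGroup.induction_on with
      | H a => exact Stmt3Aux.key a B hq hB
  constructor
  · exact main A
  · intro h
    have := main Aᶜ h
    rwa [compl_compl] at this
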